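/- arXiv:0710.3008 — 11 statements merged into one kernel-verified Lean document; each statement's English description precedes it below -/
import Mathlib

section
/- Let g ≥ 2 and d be integers, set G_d := gcd(d − g + 1, 2g − 2) and N := (2g − 2)/G_d. A triple of integers (g₁, g₂, k) is a d-special stable vine curve of genus g if and only if there exists an integer m with 1 ≤ m < G_d such that k ≡ N·m (mod 2), 1 ≤ k ≤ min(N·m + 2, 2g − N·m), 2g₁ = N·m − k + 2, and 2g₂ = 2g − N·m − k. -/
section helpers

private lemma endpt (g d k w e : ℤ) (hg : 2 ≤ g) (h : (e:ℚ) = (d:ℚ)*(w:ℚ)/(2*g-2) + k/2) :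
    d*w + k*(g-1) = (2*g-2)*e := by
  have hc : (2*(g:ℚ)-2) ≠ 0 := by
    have : (2:ℚ) ≤ g := by exact_mod_cast hg
    nlinarith
  have hc1 : (g:ℚ) - 1 ≠ 0 := by
    have : (2:ℚ) ≤ g := by exact_mod_cast hg
    linarith
  field_simp at h
  have h' : (d:ℚ)*w + k*(g-1) = (2*g-2)*e := by linarith
  exact_mod_cast h'

private lemma endpt' (g d k w e : ℤ) (hg : 2 ≤ g) (h : (2*g-2)*e = d*w + k*(g-1)) :
    (e:ℚ) = (d:ℚ)*(w:ℚ)/(2*g-2) + k/2 := by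
  have hc : (2*(g:ℚ)-2) ≠ 0 := by
    have : (2:ℚ) ≤ g := by exact_mod_cast hg
    nlinarith
  have h' : (2*(g:ℚ)-2)*e = (d:ℚ)*w + k*(g-1) := by exact_mod_cast h
  have hc1 : (g:ℚ) - 1 ≠ 0 := by
    have : (2:ℚ) ≤ g := by exact_mod_cast hg
    linarith
  field_simp
  linarith

end helpers

/-- `(g₁, g₂, k)` encodes a stable vine curve of genus `g`: two smooth irreducible
components of genera `g₁, g₂` meeting in `k` nodes. -/
def StableVine (g g₁ g₂ k : ℤ) : Prop :=
  0 ≤ g₁ ∧ 0 ≤ g₂ ∧ 1 ≤ k ∧ g = g₁ + g₂ + k - 1 ∧ ((g₁ = 0 ∨ g₂ = 0) → 3 ≤ k)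

/-- The Basic Inequality for a component of `ω`-degree `w`, with `k` nodes, on a curve of
genus `g`, for total degree `d` and partial degree `e`. -/
def BasicIneq (g d k w e : ℤ) : Prop :=
  (d : ℚ) * w / (2 * g - 2) - k / 2 ≤ e ∧ (e : ℚ) ≤ (d : ℚ) * w / (2 * g - 2) + k / 2

/-- The strict version of the Basic Inequality. -/
def BasicIneqStrict (g d k w e : ℤ) : Prop :=
  (d : ℚ) * w / (2 * g - 2) - k / 2 < e ∧ (e : ℚ) < (d : ℚ) * w / (2 * g - 2) + k / 2

/-- `(e₁, e₂)` is a balanced multidegree of total degree `d` on the vine curve `(g₁, g₂, k)`. -/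
def IsBalanced (g d g₁ g₂ k e₁ e₂ : ℤ) : Prop :=
  e₁ + e₂ = d ∧ BasicIneq g d k (2 * g₁ - 2 + k) e₁ ∧ BasicIneq g d k (2 * g₂ - 2 + k) e₂

/-- `(e₁, e₂)` is a stably balanced multidegree of total degree `d` on `(g₁, g₂, k)`. -/
def IsStablyBalanced (g d g₁ g₂ k e₁ e₂ : ℤ) : Prop :=
  e₁ + e₂ = d ∧ BasicIneqStrict g d k (2 * g₁ - 2 + k) e₁ ∧
    BasicIneqStrict g d k (2 * g₂ - 2 + k) e₂

/-- The vine curve `(g₁, g₂, k)` is `d`-special: it admits a balanced multidegree of total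
degree `d` which is not stably balanced. -/
def DSpecial (g d g₁ g₂ k : ℤ) : Prop :=
  ∃ e₁ e₂ : ℤ, IsBalanced g d g₁ g₂ k e₁ e₂ ∧ ¬ IsStablyBalanced g d g₁ g₂ k e₁ e₂

/-- Proposition 2.9: combinatorial description of `d`-special stable vine curves. -/
theorem stmt_0 (g d : ℤ) (hg : 2 ≤ g) (G N : ℤ)
    (hG : G = Int.gcd (d - g + 1) (2 * g - 2)) (hN : N = (2 * g - 2) / G)
    (g₁ g₂ k : ℤ) :
    (StableVine g g₁ g₂ k ∧ DSpecial g d g₁ g₂ k) ↔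
      ∃ m : ℤ, 1 ≤ m ∧ m < G ∧ k % 2 = (N * m) % 2 ∧
        1 ≤ k ∧ k ≤ min (N * m + 2) (2 * g - N * m) ∧
        2 * g₁ = N * m - k + 2 ∧ 2 * g₂ = 2 * g - N * m - k := by
  -- gcd bookkeeping
  have hc0 : (2 : ℤ) * g - 2 ≠ 0 := by omega
  have hgcdpos : 0 < Int.gcd (d - g + 1) (2 * g - 2) :=
    Nat.pos_of_ne_zero (fun h => hc0 ((Int.gcd_eq_zero_iff.mp h).2)
 )
  have hGpos : 0 < G := by rw [hG]; exact_mod_cast hgcdpos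
  have hGdc : G ∣ 2 * g - 2 := hG ▸ Int.gcd_dvd_right _ _
  have hGdA : G ∣ d - g + 1 := hG ▸ Int.gcd_dvd_left _ _
  have hNG : N * G = 2 * g - 2 := by rw [hN]; exact Int.ediv_mul_cancel hGdc
  have hNpos : 0 < N := by
    rcases lt_trichotomy N 0 with h | h | h
    · exfalso; nlinarith
    · exfalso; rw [h, zero_mul] at hNG; omega
    · exact h
  obtain ⟨a, ha⟩ := hGdA
  have hcop : Int.gcd N a = 1 := by
    have := Int.gcd_div_gcd_div_gcd hgcdpos
    rw [← hG] at this
    have hA : (d - g + 1) / G = a := by rw [ha]; exact Int.mul_ediv_cancel_left a (by omega)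
    rw [hA, ← hN] at this
    rw [Int.gcd_comm]
    exact this
  constructor
  · rintro ⟨⟨hg1, hg2, hk, hgeq, hstab⟩, e₁, e₂, ⟨hsum, hB1, hB2⟩, hns⟩
    -- derive divisibility
    have hdvd : (2 * g - 2) ∣ (d - g + 1) * (2 * g₁ - 2 + k) := by
      rcases lt_or_eq_of_le hB1.1 with h1 | h1
      · rcases lt_or_eq_of_le hB1.2 with h2 | h2
        · rcases lt_or_eq_of_le hB2.1 with h3 | h3
          · rcases lt_or_eq_of_le hB2.2 with h4 | h4
            · exact absurd ⟨hsum, ⟨h1, h2⟩, ⟨h3, h4⟩⟩ hns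
            · have heq := endpt g d k (2*g₂-2+k) e₂ hg h4
              exact ⟨e₁ - g₁ + 1, by linear_combination -heq - 2*d*hgeq + (-2*g+2)*hsum⟩
          · have heq := endpt g d (-k) (2*g₂-2+k) e₂ hg (by push_cast; push_cast at h3; linarith)
            exact ⟨e₁ - g₁ + 1 - k, by linear_combination -heq - 2*d*hgeq + (-2*g+2)*hsum⟩
        · have heq := endpt g d k (2*g₁-2+k) e₁ hg h2
          exact ⟨e₁ - g₁ + 1 - k, by linear_combination heq⟩
      · have heq := endpt g d (-k) (2*g₁-2+k) e₁ hg (by push_cast; push_cast at h1; linarith)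
        exact ⟨e₁ - g₁ + 1, by linear_combination heq⟩
    -- from divisibility to N ∣ w₁
    have hNw : N ∣ (2 * g₁ - 2 + k) := by
      have h1 : N * G ∣ (G * a) * (2 * g₁ - 2 + k) := by rw [hNG, ← ha]; exact hdvd
      have h2 : N ∣ a * (2 * g₁ - 2 + k) := by
        rcases h1 with ⟨t, ht⟩
        exact ⟨t, by apply Int.eq_of_mul_eq_mul_left (show G ≠ 0 by omega); linarith [ht]⟩
      exact Int.dvd_of_dvd_mul_right_of_gcd_one h2 hcop
    obtain ⟨m, hm⟩ := hNw
    refine ⟨m, ?_, ?_, ?_, hk, ?_, ?_, ?_⟩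
    · -- 1 ≤ m
      have hw1 : 1 ≤ 2 * g₁ - 2 + k := by omega
      have : N * 0 < N * m := by omega
      have := lt_of_mul_lt_mul_left this hNpos.le
      omega
    · -- m < G
      have hw2 : 2 * g₁ - 2 + k < 2 * g - 2 := by omega
      have : N * m < N * G := by omega
      exact lt_of_mul_lt_mul_left this hNpos.le
    · omega
    · rw [le_min_iff]; omega
    · omega
    · omega
  · rintro ⟨m, hm1, hmG, hpar, hk1, hkmin, h2g1, h2g2⟩
    rw [le_min_iff] at hkmin
    have hNm1 : 1 ≤ N * m := by
      have := le_mul_of_one_le_right hNpos.le hm1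
      omega
    have hNm2 : N * m ≤ 2 * g - 2 - N := by
      have h' : N * m ≤ N * (G - 1) := mul_le_mul_of_nonneg_left (by omega) hNpos.le
      have h'' : N * (G - 1) = N * G - N := by ring
      omega
    have hsv : StableVine g g₁ g₂ k := by
      refine ⟨by omega, by omega, by omega, by omega, by omega⟩
    refine ⟨hsv, ?_⟩
    -- construct e₁
    set e₁ : ℤ := a * m + (g₁ - 1 + k) with he₁def
    have hkey : (2 * g - 2) * e₁ = d * (2 * g₁ - 2 + k) + k * (g - 1) := by
      have hw : 2 * g₁ - 2 + k = N * m := by omega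
      linear_combination (2*g-2)*he₁def + (-(a*m))*hNG + (-(N*m))*ha + (g-1-d)*hw
    have hkey2 : (2 * g - 2) * (d - e₁) = d * (2 * g₂ - 2 + k) + (-k) * (g - 1) := by
      have hw2 : 2 * g₂ - 2 + k = 2 * g - 2 - (2 * g₁ - 2 + k) := by omega
      rw [hw2]
      linear_combination -hkey
    have hq1 := endpt' g d k (2*g₁-2+k) e₁ hg hkey
    have hq2 := endpt' g d (-k) (2*g₂-2+k) (d - e₁) hg hkey2
    have hq2' : ((d - e₁ : ℤ) : ℚ) = (d:ℚ)*((2*g₂-2+k : ℤ):ℚ)/(2*g-2) - k/2 := by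
      rw [hq2]; push_cast; ring
    have hkQ : (1:ℚ) ≤ (k:ℚ) := by exact_mod_cast hk1
    refine ⟨e₁, d - e₁, ⟨by ring, ⟨by rw [hq1]; push_cast; linarith, le_of_eq hq1⟩,
      ⟨le_of_eq hq2'.symm, by rw [hq2']; push_cast; linarith⟩⟩, ?_⟩
    rintro ⟨-, ⟨-, hlt⟩, -⟩
    rw [hq1] at hlt
    exact lt_irrefl _ hlt
end

section
/- Let g ≥ 2 and let d, d' be integers, with G_d := gcd(d − g + 1, 2g − 2) and G_{d'} := gcd(d' − g + 1, 2g − 2). Then G_d divides G_{d'} if and only if every stable vine curve of genus g that is d-special is also d'-special. -/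
lemma basicIneq_iff {g : ℤ} (hg : 2 ≤ g) (d k w e : ℤ) :
    BasicIneq g d k w e ↔
      2*d*w - k*(2*g-2) ≤ 2*(2*g-2)*e ∧ 2*(2*g-2)*e ≤ 2*d*w + k*(2*g-2) := by
  have hD : (0:ℚ) < 2*(g:ℚ) - 2 := by
    have : (2:ℚ) ≤ (g:ℚ) := by exact_mod_cast hg
    linarith
  constructor
  · rintro ⟨h1, h2⟩
    rw [sub_le_iff_le_add, div_le_iff₀ hD] at h1
    rw [← sub_le_iff_le_add, le_div_iff₀ hD] at h2
    constructor
    · have : ((2*d*w - k*(2*g-2):ℤ):ℚ) ≤ ((2*(2*g-2)*e:ℤ):ℚ) := by push_cast; linarith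
      exact_mod_cast this
    · have : ((2*(2*g-2)*e:ℤ):ℚ) ≤ ((2*d*w + k*(2*g-2):ℤ):ℚ) := by push_cast; linarith
      exact_mod_cast this
  · rintro ⟨h1, h2⟩
    have h1' : ((2*d*w - k*(2*g-2):ℤ):ℚ) ≤ ((2*(2*g-2)*e:ℤ):ℚ) := by exact_mod_cast h1
    have h2' : ((2*(2*g-2)*e:ℤ):ℚ) ≤ ((2*d*w + k*(2*g-2):ℤ):ℚ) := by exact_mod_cast h2
    push_cast at h1' h2'
    constructor
    · rw [sub_le_iff_le_add, div_le_iff₀ hD]; linarith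
    · rw [← sub_le_iff_le_add, le_div_iff₀ hD]; linarith


lemma basicIneqStrict_iff {g : ℤ} (hg : 2 ≤ g) (d k w e : ℤ) :
    BasicIneqStrict g d k w e ↔
      2*d*w - k*(2*g-2) < 2*(2*g-2)*e ∧ 2*(2*g-2)*e < 2*d*w + k*(2*g-2) := by
  have hD : (0:ℚ) < 2*(g:ℚ) - 2 := by
    have : (2:ℚ) ≤ (g:ℚ) := by exact_mod_cast hg
    linarith
  constructor
  · rintro ⟨h1, h2⟩
    rw [sub_lt_iff_lt_add, div_lt_iff₀ hD] at h1
    rw [← sub_lt_iff_lt_add, lt_div_iff₀ hD] at h2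
    constructor
    · have : ((2*d*w - k*(2*g-2):ℤ):ℚ) < ((2*(2*g-2)*e:ℤ):ℚ) := by push_cast; linarith
      exact_mod_cast this
    · have : ((2*(2*g-2)*e:ℤ):ℚ) < ((2*d*w + k*(2*g-2):ℤ):ℚ) := by push_cast; linarith
      exact_mod_cast this
  · rintro ⟨h1, h2⟩
    have h1' : ((2*d*w - k*(2*g-2):ℤ):ℚ) < ((2*(2*g-2)*e:ℤ):ℚ) := by exact_mod_cast h1
    have h2' : ((2*(2*g-2)*e:ℤ):ℚ) < ((2*d*w + k*(2*g-2):ℤ):ℚ) := by exact_mod_cast h2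
    push_cast at h1' h2'
    constructor
    · rw [sub_lt_iff_lt_add, div_lt_iff₀ hD]; linarith
    · rw [← sub_lt_iff_lt_add, lt_div_iff₀ hD]; linarith

lemma dspecial_iff {g : ℤ} (hg : 2 ≤ g) {g₁ g₂ k : ℤ} (d : ℤ)
    (hv : StableVine g g₁ g₂ k) :
    DSpecial g d g₁ g₂ k ↔ (2*g - 2) ∣ ((d - g + 1) * (2*g₁ - 2 + k)) := by
  obtain ⟨h1, h2, hk, hgen, -⟩ := hv
  subst hgen
  have two_ne : (2:ℤ) ≠ 0 := by norm_num
  set g : ℤ := g₁ + g₂ + k - 1 with hgdef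
  constructor
  · rintro ⟨e₁, e₂, ⟨hsum, hb1, hb2⟩, hns⟩
    rw [basicIneq_iff hg] at hb1 hb2
    have heq : 2*(2*g-2)*e₁ = 2*d*(2*g₁-2+k) - k*(2*g-2)
        ∨ 2*(2*g-2)*e₁ = 2*d*(2*g₁-2+k) + k*(2*g-2)
        ∨ 2*(2*g-2)*e₂ = 2*d*(2*g₂-2+k) - k*(2*g-2)
        ∨ 2*(2*g-2)*e₂ = 2*d*(2*g₂-2+k) + k*(2*g-2) := by
      by_contra hcon
      push_neg at hcon
      obtain ⟨c1, c2, c3, c4⟩ := hcon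
      exact hns ⟨hsum, (basicIneqStrict_iff hg d k _ e₁).mpr
          ⟨lt_of_le_of_ne hb1.1 (fun h => c1 h.symm), lt_of_le_of_ne hb1.2 c2⟩,
        (basicIneqStrict_iff hg d k _ e₂).mpr
          ⟨lt_of_le_of_ne hb2.1 (fun h => c3 h.symm), lt_of_le_of_ne hb2.2 c4⟩⟩
    have key : ∀ q : ℤ, 2*((d - g + 1) * (2*g₁ - 2 + k)) = 2*((2*g-2)*q) →
        (2*g - 2) ∣ ((d - g + 1) * (2*g₁ - 2 + k)) := by
      intro q hq
      exact ⟨q, mul_left_cancel₀ two_ne hq⟩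
    rcases heq with h | h | h | h
    · refine key (e₁ - g₁ + 1) ?_
      simp only [hgdef] at h ⊢
      first
        | linear_combination h
        | linear_combination -h
    · refine key (e₁ - g₁ + 1 - k) ?_
      simp only [hgdef] at h ⊢
      first
        | linear_combination h
        | linear_combination -h
    · refine key (d - e₂ - g₁ + 1 - k) ?_
      simp only [hgdef] at h ⊢
      first
        | linear_combination h
        | linear_combination -h
    · refine key (d - e₂ - g₁ + 1) ?_
      simp only [hgdef] at h ⊢
      first
        | linear_combination h
        | linear_combination -h
  · rintro ⟨q, hq⟩
    have hkn : (0:ℤ) ≤ k*(2*g-2) := mul_nonneg (by linarith) (by linarith)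
    have he1 : 2*(2*g-2)*(q+g₁-1) = 2*d*(2*g₁-2+k) - k*(2*g-2) := by
      simp only [hgdef] at hq ⊢
      first
        | linear_combination (2:ℤ)*hq
        | linear_combination (-2:ℤ)*hq
    have he2 : 2*(2*g-2)*(d-(q+g₁-1)) = 2*d*(2*g₂-2+k) + k*(2*g-2) := by
      simp only [hgdef] at hq ⊢
      first
        | linear_combination (2:ℤ)*hq
        | linear_combination (-2:ℤ)*hq
    refine ⟨q + g₁ - 1, d - (q + g₁ - 1), ⟨by ring, ?_, ?_⟩, ?_⟩
    · rw [basicIneq_iff hg]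
      exact ⟨by linarith, by linarith⟩
    · rw [basicIneq_iff hg]
      exact ⟨by linarith, by linarith⟩
    · rintro ⟨-, hs1, -⟩
      rw [basicIneqStrict_iff hg] at hs1
      linarith [hs1.1]

lemma exists_vine {g : ℤ} (hg : 2 ≤ g) {w : ℤ} (h1 : 1 ≤ w) (h2 : w ≤ 2*g - 3) :
    ∃ g₁ g₂ k : ℤ, StableVine g g₁ g₂ k ∧ 2*g₁ - 2 + k = w := by
  rcases Int.even_or_odd w with ⟨m, hm⟩ | ⟨m, hm⟩
  · exact ⟨m, g - m - 1, 2, ⟨by omega, by omega, by omega, by omega, by omega⟩, by omega⟩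
  · exact ⟨m + 1, g - m - 1, 1, ⟨by omega, by omega, by omega, by omega, by omega⟩, by omega⟩


/-- Proposition 2.12 (vine-curve form): `G_d ∣ G_{d'}` iff every `d`-special stable vine
curve of genus `g` is `d'`-special. -/
theorem stmt_1 (g d d' : ℤ) (hg : 2 ≤ g) :
    Int.gcd (d - g + 1) (2 * g - 2) ∣ Int.gcd (d' - g + 1) (2 * g - 2) ↔
      ∀ g₁ g₂ k : ℤ, StableVine g g₁ g₂ k → DSpecial g d g₁ g₂ k →
        DSpecial g d' g₁ g₂ k := by
  constructor
  · intro hdvd g₁ g₂ k hv hd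
    rw [dspecial_iff hg d hv] at hd
    rw [dspecial_iff hg d' hv]
    have step1 : (2*g - 2) ∣ (Int.gcd (d - g + 1) (2*g - 2) : ℤ) * (2*g₁ - 2 + k) := by
      rw [Int.gcd_eq_gcd_ab (d - g + 1) (2*g - 2)]
      have : ((d - g + 1) * Int.gcdA (d - g + 1) (2*g - 2)
            + (2*g - 2) * Int.gcdB (d - g + 1) (2*g - 2)) * (2*g₁ - 2 + k)
          = Int.gcdA (d - g + 1) (2*g - 2) * ((d - g + 1) * (2*g₁ - 2 + k))
            + (2*g - 2) * (Int.gcdB (d - g + 1) (2*g - 2) * (2*g₁ - 2 + k)) := by ring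
      rw [this]
      exact dvd_add (Dvd.dvd.mul_left hd _) (Dvd.intro _ rfl)
    have step2 : (Int.gcd (d - g + 1) (2*g - 2) : ℤ) ∣ (d' - g + 1) :=
      dvd_trans (Int.natCast_dvd_natCast.mpr hdvd) (Int.gcd_dvd_left _ _)
    exact dvd_trans step1 (mul_dvd_mul_right step2 _)
  · intro H
    by_cases h1 : Int.gcd (d - g + 1) (2*g - 2) = 1
    · rw [show (2 : ℤ) * g - 2 = 2*g - 2 by ring] at h1 ⊢
      rw [h1]
      exact Nat.one_dvd _
    · have hG2 : 2 ≤ (Int.gcd (d - g + 1) (2*g - 2) : ℤ) := by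
        have h0 : Int.gcd (d - g + 1) (2*g - 2) ≠ 0 := by
          intro h0
          rw [Int.gcd_eq_zero_iff] at h0
          omega
        have : (1:ℕ) < Int.gcd (d - g + 1) (2*g - 2) :=
          lt_of_le_of_ne (Nat.one_le_iff_ne_zero.mpr h0) (Ne.symm h1)
        exact_mod_cast this
      obtain ⟨a, ha⟩ : (Int.gcd (d - g + 1) (2*g - 2) : ℤ) ∣ (2*g - 2) := Int.gcd_dvd_right _ _
      have ha1 : 1 ≤ a := by nlinarith
      have ha2 : a ≤ 2*g - 3 := by nlinarith
      obtain ⟨g₁, g₂, k, hv, hw⟩ := exists_vine hg ha1 ha2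
      obtain ⟨t₀, ht₀⟩ : (Int.gcd (d - g + 1) (2*g - 2) : ℤ) ∣ (d - g + 1) :=
        Int.gcd_dvd_left _ _
      have hda : DSpecial g d g₁ g₂ k := by
        rw [dspecial_iff hg d hv]
        refine ⟨t₀, ?_⟩
        rw [hw]
        linear_combination a * ht₀ - t₀ * ha
      have hd' := (dspecial_iff hg d' hv).mp (H g₁ g₂ k hv hda)
      obtain ⟨m, hm⟩ := hd'
      rw [hw] at hm
      have hGt' : (Int.gcd (d - g + 1) (2*g - 2) : ℤ) ∣ (d' - g + 1) := by
        refine ⟨m, mul_right_cancel₀ (by omega : a ≠ 0) ?_⟩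
        linear_combination hm + m * ha
      have hfin : (Int.gcd (d - g + 1) (2*g - 2) : ℤ) ∣
          (Int.gcd (d' - g + 1) (2*g - 2) : ℤ) := Int.natCast_dvd_natCast.mpr (Int.dvd_gcd hGt' (Int.gcd_dvd_right _ _))
      exact_mod_cast hfin
end

section
/- Let g ≥ 2, and for each positive divisor N of 2g − 2 let Σ(N) denote the set of stable vine curves (g₁, g₂, k) of genus g such that N divides w₁ = 2g₁ − 2 + k. Then for any two positive divisors N, N' of 2g − 2, Σ(N) ⊆ Σ(N') if and only if N' divides N. (Hence the complements of these loci form a lattice of subsets ordered by divisibility.) -/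
/-- Proposition 2.14 (vine-curve form): for positive divisors `N, N'` of `2g-2`, the locus
of stable vine curves with `N ∣ w₁` is contained in the one with `N' ∣ w₁` iff `N' ∣ N`. -/
theorem stmt_3 (g : ℤ) (hg : 2 ≤ g) (N N' : ℤ) (hN : 0 < N) (hN' : 0 < N')
    (hNd : N ∣ 2 * g - 2) (hN'd : N' ∣ 2 * g - 2) :
    {p : ℤ × ℤ × ℤ | StableVine g p.1 p.2.1 p.2.2 ∧ N ∣ 2 * p.1 - 2 + p.2.2} ⊆
      {p : ℤ × ℤ × ℤ | StableVine g p.1 p.2.1 p.2.2 ∧ N' ∣ 2 * p.1 - 2 + p.2.2} ↔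
      N' ∣ N := by
  constructor
  · intro h
    by_cases hc : N = 2 * g - 2
    · exact hc ▸ hN'd
    · have hle : N ≤ 2 * g - 2 := Int.le_of_dvd (by linarith) hNd
      have hlt : N < 2 * g - 2 := lt_of_le_of_ne hle hc
      obtain ⟨t, ht⟩ := hNd
      have ht2 : 2 ≤ t := by nlinarith
      have h2N : 2 * N ≤ 2 * g - 2 := by nlinarith
      rcases Int.even_or_odd N with ⟨m, hm⟩ | ⟨m, hm⟩
      · have hmem : (m, g - 1 - m, 2) ∈
            {p : ℤ × ℤ × ℤ | StableVine g p.1 p.2.1 p.2.2 ∧ N ∣ 2 * p.1 - 2 + p.2.2} := by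
          show StableVine g m (g - 1 - m) 2 ∧ N ∣ 2 * m - 2 + 2
          refine ⟨⟨by omega, by omega, by omega, by omega, fun hor => by omega⟩, ?_⟩
          have : 2 * m - 2 + 2 = N := by omega
          exact this ▸ dvd_refl N
        have h2 := (h hmem).2
        have : (2 : ℤ) * m - 2 + 2 = N := by omega
        exact this ▸ h2
      · have hmem : (m + 1, g - 1 - m, 1) ∈
            {p : ℤ × ℤ × ℤ | StableVine g p.1 p.2.1 p.2.2 ∧ N ∣ 2 * p.1 - 2 + p.2.2} := by
          show StableVine g (m + 1) (g - 1 - m) 1 ∧ N ∣ 2 * (m + 1) - 2 + 1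
          refine ⟨⟨by omega, by omega, by omega, by omega, fun hor => by omega⟩, ?_⟩
          have : 2 * (m + 1) - 2 + 1 = N := by omega
          exact this ▸ dvd_refl N
        have h2 := (h hmem).2
        have : (2 : ℤ) * (m + 1) - 2 + 1 = N := by omega
        exact this ▸ h2
  · rintro hd p ⟨hs, hdvd⟩
    exact ⟨hs, hd.trans hdvd⟩
end

section
/- Let g ≥ 2 and d be integers. There exists a d-special stable vine curve of genus g if and only if gcd(d − g + 1, 2g − 2) > 1. -/
lemma mQ_pos (g : ℤ) (hg : 2 ≤ g) : (0:ℚ) < 2*(g:ℚ)-2 := by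
  have : (2:ℚ) ≤ (g:ℚ) := by exact_mod_cast hg
  linarith

lemma qplus (g d k w e : ℤ) (hg : 2 ≤ g) :
    (d:ℚ)*(w:ℚ)/(2*(g:ℚ)-2) + (k:ℚ)/2 = (e:ℚ) ↔ 2*d*w + k*(2*g-2) = 2*(2*g-2)*e := by
  have hm := mQ_pos g hg
  have hm' : (2*(g:ℚ)-2) ≠ 0 := ne_of_gt hm
  constructor
  · intro h
    have h2 : (2:ℚ)*d*w + k*(2*g-2) = 2*(2*g-2)*e := by rw [div_add_div _ _ hm' two_ne_zero, div_eq_iff (mul_ne_zero hm' two_ne_zero)] at h; linarith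
    exact_mod_cast h2
  · intro h
    have h2 : (2:ℚ)*d*w + k*(2*g-2) = 2*(2*g-2)*e := by exact_mod_cast h
    rw [div_add_div _ _ hm' two_ne_zero, div_eq_iff (mul_ne_zero hm' two_ne_zero)]
    linarith

lemma qminus (g d k w e : ℤ) (hg : 2 ≤ g) :
    (d:ℚ)*(w:ℚ)/(2*(g:ℚ)-2) - (k:ℚ)/2 = (e:ℚ) ↔ 2*d*w - k*(2*g-2) = 2*(2*g-2)*e := by
  have hm := mQ_pos g hg
  have hm' : (2*(g:ℚ)-2) ≠ 0 := ne_of_gt hm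
  constructor
  · intro h
    have h2 : (2:ℚ)*d*w - k*(2*g-2) = 2*(2*g-2)*e := by rw [div_sub_div _ _ hm' two_ne_zero, div_eq_iff (mul_ne_zero hm' two_ne_zero)] at h; linarith
    exact_mod_cast h2
  · intro h
    have h2 : (2:ℚ)*d*w - k*(2*g-2) = 2*(2*g-2)*e := by exact_mod_cast h
    rw [div_sub_div _ _ hm' two_ne_zero, div_eq_iff (mul_ne_zero hm' two_ne_zero)]
    linarith

lemma div_of_plus (g d k a e : ℤ)
    (h : 2*d*(2*a-2+k) + k*(2*g-2) = 2*(2*g-2)*e) :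
    (d-g+1)*(2*a-2+k) = (2*g-2)*(e-a+1-k) := by
  have h2 : 2*((d-g+1)*(2*a-2+k)) = 2*((2*g-2)*(e-a+1-k)) := by linear_combination h
  exact mul_left_cancel₀ (by norm_num : (2:ℤ) ≠ 0) h2

lemma div_of_minus (g d k a e : ℤ)
    (h : 2*d*(2*a-2+k) - k*(2*g-2) = 2*(2*g-2)*e) :
    (d-g+1)*(2*a-2+k) = (2*g-2)*(e-a+1) := by
  have h2 : 2*((d-g+1)*(2*a-2+k)) = 2*((2*g-2)*(e-a+1)) := by linear_combination h
  exact mul_left_cancel₀ (by norm_num : (2:ℤ) ≠ 0) h2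

lemma gcd_gt (g d w t : ℤ) (hg : 2 ≤ g) (hw : 0 < w) (hwm : w < 2*g-2)
    (h : (d-g+1)*w = (2*g-2)*t) : 1 < Int.gcd (d - g + 1) (2 * g - 2) := by
  by_contra hle
  push_neg at hle
  have hne : Int.gcd (d - g + 1) (2*g-2) ≠ 0 := by
    simp only [ne_eq, Int.gcd_eq_zero_iff, not_and_or]
    right; omega
  have h1 : Int.gcd (d - g + 1) (2*g-2) = 1 := by omega
  have hcop : IsCoprime (d - g + 1) (2*g-2) := Int.isCoprime_iff_gcd_eq_one.mpr h1
  have hdvd : (2*g-2 : ℤ) ∣ (d-g+1)*w := ⟨t, h⟩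
  have hdw : (2*g-2 : ℤ) ∣ w := (hcop.symm).dvd_of_dvd_mul_left hdvd
  have := Int.le_of_dvd hw hdw
  omega

/-- There exists a `d`-special stable vine curve of genus `g` iff
`gcd (d - g + 1) (2g - 2) > 1`. -/
theorem stmt_4 (g d : ℤ) (hg : 2 ≤ g) :
    (∃ g₁ g₂ k : ℤ, StableVine g g₁ g₂ k ∧ DSpecial g d g₁ g₂ k) ↔
      1 < Int.gcd (d - g + 1) (2 * g - 2) := by
  constructor
  · rintro ⟨g₁, g₂, k, ⟨hg1, hg2, hk, hgsum, hmin⟩, e₁, e₂, ⟨hsum, hb1, hb2⟩, hnst⟩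
    have hw1pos : (0:ℤ) < 2*g₁-2+k := by omega
    have hw1lt : 2*g₁-2+k < 2*g-2 := by omega
    have hw2pos : (0:ℤ) < 2*g₂-2+k := by omega
    have hw2lt : 2*g₂-2+k < 2*g-2 := by omega
    have hns : ¬(BasicIneqStrict g d k (2*g₁-2+k) e₁ ∧ BasicIneqStrict g d k (2*g₂-2+k) e₂) :=
      fun hc => hnst ⟨hsum, hc.1, hc.2⟩
    rcases not_and_or.mp hns with h | h <;> rcases not_and_or.mp (by
        intro hc; exact h hc : ¬((_ ∧ _))) with h' | h'
    · have heq : (d:ℚ)*((2*g₁-2+k : ℤ):ℚ)/(2*(g:ℚ)-2) - (k:ℚ)/2 = (e₁:ℚ) :=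
        le_antisymm hb1.1 (not_lt.mp h')
      exact gcd_gt g d _ _ hg hw1pos hw1lt
        (div_of_minus g d k g₁ e₁ ((qminus g d k (2*g₁-2+k) e₁ hg).mp heq))
    · have heq : (d:ℚ)*((2*g₁-2+k : ℤ):ℚ)/(2*(g:ℚ)-2) + (k:ℚ)/2 = (e₁:ℚ) :=
        le_antisymm (not_lt.mp h') hb1.2
      exact gcd_gt g d _ _ hg hw1pos hw1lt
        (div_of_plus g d k g₁ e₁ ((qplus g d k (2*g₁-2+k) e₁ hg).mp heq))
    · have heq : (d:ℚ)*((2*g₂-2+k : ℤ):ℚ)/(2*(g:ℚ)-2) - (k:ℚ)/2 = (e₂:ℚ) :=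
        le_antisymm hb2.1 (not_lt.mp h')
      exact gcd_gt g d _ _ hg hw2pos hw2lt
        (div_of_minus g d k g₂ e₂ ((qminus g d k (2*g₂-2+k) e₂ hg).mp heq))
    · have heq : (d:ℚ)*((2*g₂-2+k : ℤ):ℚ)/(2*(g:ℚ)-2) + (k:ℚ)/2 = (e₂:ℚ) :=
        le_antisymm (not_lt.mp h') hb2.2
      exact gcd_gt g d _ _ hg hw2pos hw2lt
        (div_of_plus g d k g₂ e₂ ((qplus g d k (2*g₂-2+k) e₂ hg).mp heq))
  · intro hG
    set G : ℤ := (Int.gcd (d - g + 1) (2 * g - 2) : ℤ) with hGdef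
    have hG2 : (2:ℤ) ≤ G := by
      have h2 : 2 ≤ Int.gcd (d - g + 1) (2 * g - 2) := hG
      rw [hGdef]
      exact_mod_cast h2
    obtain ⟨a, ha⟩ : G ∣ (d - g + 1) := Int.gcd_dvd_left _ _
    obtain ⟨b, hb⟩ : G ∣ (2 * g - 2) := Int.gcd_dvd_right _ _
    have hmpos : (0:ℤ) < 2*g-2 := by omega
    have hb1 : 1 ≤ b := by nlinarith
    have hblt : b < 2*g-2 := by nlinarith
    have hnb : (d-g+1)*b = (2*g-2)*a := by rw [ha, hb]; ring
    rcases Int.even_or_odd b with ⟨c, hc⟩ | ⟨c, hc⟩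
    · -- b = c + c, even: k = 2, g₁ = c
      subst hc
      refine ⟨c, g-1-c, 2, ⟨by omega, by omega, by omega, by omega, by omega⟩,
        a+c+1, d-(a+c+1), ⟨by ring, ?_, ?_⟩, ?_⟩
      · have hz1 : 2*d*(2*c-2+2) + 2*(2*g-2) = 2*(2*g-2)*(a+c+1) := by
          linear_combination 2*hnb
        have hq1 := (qplus g d 2 (2*c-2+2) (a+c+1) hg).mpr hz1
        exact ⟨by push_cast at hq1 ⊢; linarith, le_of_eq hq1.symm⟩
      · have hz2 : 2*d*(2*(g-1-c)-2+2) - 2*(2*g-2) = 2*(2*g-2)*(d-(a+c+1)) := by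
          linear_combination (-2)*hnb
        have hq2 := (qminus g d 2 (2*(g-1-c)-2+2) (d-(a+c+1)) hg).mpr hz2
        exact ⟨le_of_eq hq2, by push_cast at hq2 ⊢; linarith⟩
      · rintro ⟨-, hs1, -⟩
        have hz1 : 2*d*(2*c-2+2) + 2*(2*g-2) = 2*(2*g-2)*(a+c+1) := by
          linear_combination 2*hnb
        have hq1 := (qplus g d 2 (2*c-2+2) (a+c+1) hg).mpr hz1
        exact absurd hs1.2 (not_lt.mpr (le_of_eq hq1))
    · -- b = 2c+1, odd: k = 1, g₁ = c+1
      subst hc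
      refine ⟨c+1, g-c-1, 1, ⟨by omega, by omega, by omega, by omega, by omega⟩,
        a+c+1, d-(a+c+1), ⟨by ring, ?_, ?_⟩, ?_⟩
      · have hz1 : 2*d*(2*(c+1)-2+1) + 1*(2*g-2) = 2*(2*g-2)*(a+c+1) := by
          linear_combination 2*hnb
        have hq1 := (qplus g d 1 (2*(c+1)-2+1) (a+c+1) hg).mpr hz1
        exact ⟨by push_cast at hq1 ⊢; linarith, le_of_eq hq1.symm⟩
      · have hz2 : 2*d*(2*(g-c-1)-2+1) - 1*(2*g-2) = 2*(2*g-2)*(d-(a+c+1)) := by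
          linear_combination (-2)*hnb
        have hq2 := (qminus g d 1 (2*(g-c-1)-2+1) (d-(a+c+1)) hg).mpr hz2
        exact ⟨le_of_eq hq2, by push_cast at hq2 ⊢; linarith⟩
      · rintro ⟨-, hs1, -⟩
        have hz1 : 2*d*(2*(c+1)-2+1) + 1*(2*g-2) = 2*(2*g-2)*(a+c+1) := by
          linear_combination 2*hnb
        have hq1 := (qplus g d 1 (2*(c+1)-2+1) (a+c+1) hg).mpr hz1
        exact absurd hs1.2 (not_lt.mpr (le_of_eq hq1))
end

section
/- Let g ≥ 2 and d be integers and let (g₁, g₂, k) be a stable vine curve of genus g. Then (g₁, g₂, k) admits a balanced multidegree of total degree d which is not stably balanced if and only if (2g − 2) divides (d − g + 1)·w₁, where w₁ = 2g₁ − 2 + k (equivalently, (d−g+1)·w₁/(2g−2) is an integer; equivalently for w₂ in place of w₁). -/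
/-- Remark 1.4(D) (vine-curve form): a stable vine curve admits a balanced multidegree of
total degree `d` which is not stably balanced iff `(2g-2) ∣ (d-g+1)·w₁`. -/
theorem stmt_6 (g d : ℤ) (hg : 2 ≤ g) (g₁ g₂ k : ℤ) (hvine : StableVine g g₁ g₂ k) :
    (∃ e₁ e₂ : ℤ, IsBalanced g d g₁ g₂ k e₁ e₂ ∧ ¬ IsStablyBalanced g d g₁ g₂ k e₁ e₂) ↔
      2 * g - 2 ∣ (d - g + 1) * (2 * g₁ - 2 + k) := by
  obtain ⟨hg1, hg2, hk, hgeq, -⟩ := hvine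
  subst hgeq
  have hgQ : (2:ℚ) ≤ (g₁:ℚ) + g₂ + k - 1 := by exact_mod_cast hg
  have hkQ : (1:ℚ) ≤ (k:ℚ) := by exact_mod_cast hk
  have hNpos : (0:ℚ) < 2 * ((g₁ + g₂ + k - 1 : ℤ) : ℚ) - 2 := by push_cast; linarith
  have hN : (2 * ((g₁ + g₂ + k - 1 : ℤ) : ℚ) - 2) ≠ 0 := ne_of_gt hNpos
  constructor
  · rintro ⟨e₁, e₂, ⟨hsum, ⟨h1l, h1r⟩, ⟨h2l, h2r⟩⟩, hns⟩
    rcases h1l.lt_or_eq with h1l' | h1l'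
    · rcases h1r.lt_or_eq with h1r' | h1r'
      · rcases h2l.lt_or_eq with h2l' | h2l'
        · rcases h2r.lt_or_eq with h2r' | h2r'
          · exact absurd ⟨hsum, ⟨h1l', h1r'⟩, ⟨h2l', h2r'⟩⟩ hns
          · -- e₂ = μ₂ + k/2
            have h : (d:ℚ) * ((2 * g₂ - 2 + k : ℤ) : ℚ) =
                ((e₂:ℚ) - k / 2) * (2 * ((g₁ + g₂ + k - 1 : ℤ) : ℚ) - 2) := by
              rw [← div_eq_iff hN]; linarith
            refine ⟨d - (g₁ + g₂ + k - 1) + 1 - (e₂ - g₂ + 1 - k), ?_⟩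
            have h' : (d:ℚ) * (2 * g₂ - 2 + k) =
                ((e₂:ℚ) - k / 2) * (2 * ((g₁:ℚ) + g₂ + k - 1) - 2) := by push_cast at h ⊢; linarith
            qify
            linear_combination -h'
        · -- e₂ = μ₂ - k/2
          have h : (d:ℚ) * ((2 * g₂ - 2 + k : ℤ) : ℚ) =
              ((e₂:ℚ) + k / 2) * (2 * ((g₁ + g₂ + k - 1 : ℤ) : ℚ) - 2) := by
            rw [← div_eq_iff hN]; linarith
          refine ⟨d - (g₁ + g₂ + k - 1) + 1 - (e₂ - g₂ + 1), ?_⟩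
          have h' : (d:ℚ) * (2 * g₂ - 2 + k) =
              ((e₂:ℚ) + k / 2) * (2 * ((g₁:ℚ) + g₂ + k - 1) - 2) := by push_cast at h ⊢; linarith
          qify
          linear_combination -h'
      · -- e₁ = μ₁ + k/2
        have h : (d:ℚ) * ((2 * g₁ - 2 + k : ℤ) : ℚ) =
            ((e₁:ℚ) - k / 2) * (2 * ((g₁ + g₂ + k - 1 : ℤ) : ℚ) - 2) := by
          rw [← div_eq_iff hN]; linarith
        refine ⟨e₁ - g₁ + 1 - k, ?_⟩
        have h' : (d:ℚ) * (2 * g₁ - 2 + k) =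
            ((e₁:ℚ) - k / 2) * (2 * ((g₁:ℚ) + g₂ + k - 1) - 2) := by push_cast at h ⊢; linarith
        qify
        linear_combination h'
    · -- e₁ = μ₁ - k/2
      have h : (d:ℚ) * ((2 * g₁ - 2 + k : ℤ) : ℚ) =
          ((e₁:ℚ) + k / 2) * (2 * ((g₁ + g₂ + k - 1 : ℤ) : ℚ) - 2) := by
        rw [← div_eq_iff hN]; linarith
      refine ⟨e₁ - g₁ + 1, ?_⟩
      have h' : (d:ℚ) * (2 * g₁ - 2 + k) =
          ((e₁:ℚ) + k / 2) * (2 * ((g₁:ℚ) + g₂ + k - 1) - 2) := by push_cast at h ⊢; linarith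
      qify
      linear_combination h'
  · rintro ⟨c, hc⟩
    have hcQ : ((d:ℚ) - ((g₁ + g₂ + k - 1 : ℤ) : ℚ) + 1) * (2 * g₁ - 2 + k)
        = (2 * ((g₁ + g₂ + k - 1 : ℤ) : ℚ) - 2) * c := by exact_mod_cast hc
    refine ⟨c + g₁ - 1 + k, d - (c + g₁ - 1 + k), ⟨by ring, ?_, ?_⟩, ?_⟩
    · constructor
      · have hE1 : (d:ℚ) * ((2 * g₁ - 2 + k : ℤ) : ℚ) / (2 * ((g₁ + g₂ + k - 1 : ℤ) : ℚ) - 2)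
            = ((c + g₁ - 1 + k : ℤ) : ℚ) - (k:ℚ) / 2 := by
          rw [div_eq_iff hN]; push_cast at hcQ ⊢; linear_combination hcQ
        rw [hE1]; push_cast; linarith
      · have hE1 : (d:ℚ) * ((2 * g₁ - 2 + k : ℤ) : ℚ) / (2 * ((g₁ + g₂ + k - 1 : ℤ) : ℚ) - 2)
            = ((c + g₁ - 1 + k : ℤ) : ℚ) - (k:ℚ) / 2 := by
          rw [div_eq_iff hN]; push_cast at hcQ ⊢; linear_combination hcQ
        rw [hE1]; push_cast; linarith
    · constructor
      · have hE2 : (d:ℚ) * ((2 * g₂ - 2 + k : ℤ) : ℚ) / (2 * ((g₁ + g₂ + k - 1 : ℤ) : ℚ) - 2)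
            = ((d - (c + g₁ - 1 + k) : ℤ) : ℚ) + (k:ℚ) / 2 := by
          rw [div_eq_iff hN]; push_cast at hcQ ⊢; linear_combination -hcQ
        rw [hE2]; push_cast; linarith
      · have hE2 : (d:ℚ) * ((2 * g₂ - 2 + k : ℤ) : ℚ) / (2 * ((g₁ + g₂ + k - 1 : ℤ) : ℚ) - 2)
            = ((d - (c + g₁ - 1 + k) : ℤ) : ℚ) + (k:ℚ) / 2 := by
          rw [div_eq_iff hN]; push_cast at hcQ ⊢; linear_combination -hcQ
        rw [hE2]; push_cast; linarith
    · rintro ⟨-, ⟨-, hlt⟩, -⟩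
      have hE1 : (d:ℚ) * ((2 * g₁ - 2 + k : ℤ) : ℚ) / (2 * ((g₁ + g₂ + k - 1 : ℤ) : ℚ) - 2)
          = ((c + g₁ - 1 + k : ℤ) : ℚ) - (k:ℚ) / 2 := by
        rw [div_eq_iff hN]; push_cast at hcQ ⊢; linear_combination hcQ
      rw [hE1] at hlt; linarith
end

section
/- Let g ≥ 2 and d be integers with G_d := gcd(d − g + 1, 2g − 2) > 1. Then there exist integers g₁ ≥ 1, g₂ ≥ 1 and δ ∈ {1, 2} with δ ≡ (2g−2)/G_d (mod 2), such that g₁ + g₂ + δ − 1 = g and 2g₁ − 2 + δ = (2g − 2)/G_d. In particular there exists a stable vine curve of genus g with w₁ = (2g−2)/G_d. -/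
/-- The construction in the proof of Proposition 2.12: if `G_d > 1` there is a stable vine
curve of genus `g` with `w₁ = (2g-2)/G_d`, with `δ ∈ {1, 2}` nodes. -/
theorem stmt_7 (g d : ℤ) (hg : 2 ≤ g) (G N : ℤ)
    (hG : G = Int.gcd (d - g + 1) (2 * g - 2)) (hN : N = (2 * g - 2) / G)
    (hG1 : 1 < G) :
    ∃ g₁ g₂ δ : ℤ, 1 ≤ g₁ ∧ 1 ≤ g₂ ∧ (δ = 1 ∨ δ = 2) ∧ δ % 2 = N % 2 ∧
      g₁ + g₂ + δ - 1 = g ∧ 2 * g₁ - 2 + δ = N ∧ StableVine g g₁ g₂ δ := by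
  have hGdvd : G ∣ 2 * g - 2 := by rw [hG]; exact Int.gcd_dvd_right _ _
  have hNG : N * G = 2 * g - 2 := by rw [hN]; exact Int.ediv_mul_cancel hGdvd
  have hGpos : 0 < G := lt_trans one_pos hG1
  have hNpos : 1 ≤ N := by nlinarith
  have hNle : N ≤ g - 1 := by nlinarith
  rcases Int.even_or_odd N with ⟨m, hm⟩ | ⟨m, hm⟩
  · refine ⟨m, g - m - 1, 2, by omega, by omega, Or.inr rfl, by omega, by omega, by omega,
      by unfold StableVine; omega⟩
  · refine ⟨m + 1, g - m - 1, 1, by omega, by omega, Or.inl rfl, by omega, by omega, by omega,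
      by unfold StableVine; omega⟩
end

section
/- Let g ≥ 2 and d be integers, set G_d := gcd(d − g + 1, 2g − 2) and N := (2g−2)/G_d. Let m, k be integers with 1 ≤ m < G_d, k ≡ N·m (mod 2) and 1 ≤ k ≤ min(N·m + 2, 2g − N·m). Define g₁ := (N·m − k + 2)/2 and g₂ := (2g − N·m − k)/2. Then g₁ and g₂ are nonnegative integers, g = g₁ + g₂ + k − 1, if g₁ = 0 or g₂ = 0 then k ≥ 3 (so (g₁, g₂, k) is a stable vine curve of genus g), and (g₁, g₂, k) is d-special. -/
/-- Converse direction of Proposition 2.9: the listed numerical data give rise to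
`d`-special stable vine curves of genus `g`. -/
theorem stmt_8 (g d : ℤ) (hg : 2 ≤ g) (G N : ℤ)
    (hG : G = Int.gcd (d - g + 1) (2 * g - 2)) (hN : N = (2 * g - 2) / G)
    (m k : ℤ) (hm : 1 ≤ m) (hmG : m < G) (hpar : k % 2 = (N * m) % 2)
    (hk1 : 1 ≤ k) (hk2 : k ≤ min (N * m + 2) (2 * g - N * m)) :
    2 * ((N * m - k + 2) / 2) = N * m - k + 2 ∧
    2 * ((2 * g - N * m - k) / 2) = 2 * g - N * m - k ∧
    0 ≤ (N * m - k + 2) / 2 ∧ 0 ≤ (2 * g - N * m - k) / 2 ∧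
    g = (N * m - k + 2) / 2 + (2 * g - N * m - k) / 2 + k - 1 ∧
    (((N * m - k + 2) / 2 = 0 ∨ (2 * g - N * m - k) / 2 = 0) → 3 ≤ k) ∧
    StableVine g ((N * m - k + 2) / 2) ((2 * g - N * m - k) / 2) k ∧
    DSpecial g d ((N * m - k + 2) / 2) ((2 * g - N * m - k) / 2) k := by

  have hG2 : (0:ℤ) < 2 * g - 2 := by linarith
  have hGpos : 0 < G := by
    rw [hG]
    have : Int.gcd (d - g + 1) (2 * g - 2) ≠ 0 := by
      intro h
      rw [Int.gcd_eq_zero_iff] at h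
      omega
    exact_mod_cast Nat.pos_of_ne_zero this
  have hdvdR : G ∣ 2 * g - 2 := hG ▸ Int.gcd_dvd_right (d - g + 1) (2 * g - 2)
  have hdvdL : G ∣ d - g + 1 := hG ▸ Int.gcd_dvd_left (d - g + 1) (2 * g - 2)
  have hNG : N * G = 2 * g - 2 := by rw [hN]; exact Int.ediv_mul_cancel hdvdR
  have hNpos : 0 < N := by nlinarith
  set t := (d - g + 1) / G with ht_def
  have ht : G * t = d - g + 1 := Int.mul_ediv_cancel' hdvdL
  have hev : 2 ∣ N * m - k := by omega
  have hg1 : 2 * ((N * m - k + 2) / 2) = N * m - k + 2 :=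
    Int.mul_ediv_cancel' (by omega)
  have hg2 : 2 * ((2 * g - N * m - k) / 2) = 2 * g - N * m - k :=
    Int.mul_ediv_cancel' (by omega)
  have hNm1 : 1 ≤ N * m := by nlinarith
  have hNm2 : N * m ≤ 2 * g - 3 := by nlinarith
  have hg1n : 0 ≤ (N * m - k + 2) / 2 := by omega
  have hg2n : 0 ≤ (2 * g - N * m - k) / 2 := by omega
  have hsum : g = (N * m - k + 2) / 2 + (2 * g - N * m - k) / 2 + k - 1 := by omega
  have hstab : (((N * m - k + 2) / 2 = 0 ∨ (2 * g - N * m - k) / 2 = 0) → 3 ≤ k) := by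
    omega
  refine ⟨hg1, hg2, hg1n, hg2n, hsum, hstab, ⟨hg1n, hg2n, hk1, hsum, hstab⟩, ?_⟩
  -- d-special
  set e₁ : ℤ := (N * m + k) / 2 + t * m with he1_def
  have h2e1 : 2 * e₁ = N * m + k + 2 * (t * m) := by
    have : 2 * ((N * m + k) / 2) = N * m + k := Int.mul_ediv_cancel' (by omega)
    omega
  have keyZ : 2 * e₁ * (2 * g - 2) = 2 * d * (N * m) + k * (2 * g - 2) := by
    linear_combination (2 * g - 2) * h2e1 + (-2 * m * t) * hNG + 2 * m * N * ht
  have hQ2 : ((2:ℚ) * (g:ℚ) - 2) ≠ 0 := by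
    have : ((0:ℚ)) < 2 * (g:ℚ) - 2 := by exact_mod_cast hG2
    linarith
  have hcenter : (e₁ : ℚ) = (d : ℚ) * ((N:ℚ) * m) / (2 * g - 2) + (k:ℚ) / 2 := by
    have hc : (2:ℚ) * e₁ * (2 * g - 2) = 2 * d * ((N:ℚ) * m) + k * (2 * g - 2) := by
      exact_mod_cast congrArg (fun x : ℤ => (x : ℚ)) keyZ
    rw [div_add_div _ _ hQ2 two_ne_zero, eq_div_iff (mul_ne_zero hQ2 two_ne_zero)]
    linear_combination hc
  have hw1 : 2 * ((N * m - k + 2) / 2) - 2 + k = N * m := by omega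
  have hw2 : 2 * ((2 * g - N * m - k) / 2) - 2 + k = 2 * g - 2 - N * m := by omega
  have hkQ : (1:ℚ) ≤ (k:ℚ) := by exact_mod_cast hk1
  have hcenter2 : ((d - e₁ : ℤ) : ℚ)
      = (d : ℚ) * ((2:ℚ) * g - 2 - (N:ℚ) * m) / (2 * g - 2) - (k:ℚ) / 2 := by
    have hc : (2:ℚ) * e₁ * (2 * g - 2) = 2 * d * ((N:ℚ) * m) + k * (2 * g - 2) := by
      exact_mod_cast congrArg (fun x : ℤ => (x : ℚ)) keyZ
    push_cast
    rw [div_sub_div _ _ hQ2 two_ne_zero, eq_div_iff (mul_ne_zero hQ2 two_ne_zero)]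
    linear_combination -hc
  refine ⟨e₁, d - e₁, ⟨by ring, ?_, ?_⟩, ?_⟩
  · rw [BasicIneq, hw1]
    push_cast
    rw [hcenter]
    constructor <;> linarith
  · rw [BasicIneq, hw2]
    push_cast
    push_cast at hcenter2
    rw [hcenter2]
    constructor <;> linarith
  · rintro ⟨-, ⟨-, hlt⟩, -⟩
    rw [hw1] at hlt
    push_cast at hlt
    rw [hcenter] at hlt
    linarith
end

section
/- Let g ≥ 2 and d be integers and let (g₁, g₂, k) be a stable vine curve of genus g. Then there exist two distinct balanced multidegrees (e₁, e₂) and (e₁', e₂') of total degree d with k dividing e₁ − e₁' if and only if (g₁, g₂, k) is d-special. -/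
lemma mu2_eq (g d g₁ g₂ k : ℤ) (hg : 2 ≤ g) (hsum : g = g₁ + g₂ + k - 1) :
    (d : ℚ) * ((2 * g₂ - 2 + k : ℤ) : ℚ) / (2 * g - 2) =
      d - (d : ℚ) * ((2 * g₁ - 2 + k : ℤ) : ℚ) / (2 * g - 2) := by
  have hgq : (2:ℚ) ≤ (g:ℚ) := by exact_mod_cast hg
  have hq : (2:ℚ) * g - 2 ≠ 0 := by linarith
  have hs : (g:ℚ) = g₁ + g₂ + k - 1 := by exact_mod_cast hsum
  rw [eq_sub_iff_add_eq, ← add_div, div_eq_iff hq]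
  push_cast
  linear_combination (-2*(d:ℚ)) * hs

lemma bal_char (g d g₁ g₂ k e₁ e₂ : ℤ) (hg : 2 ≤ g) (hsum : g = g₁ + g₂ + k - 1) :
    IsBalanced g d g₁ g₂ k e₁ e₂ ↔
      e₁ + e₂ = d ∧
      (d : ℚ) * ((2 * g₁ - 2 + k : ℤ) : ℚ) / (2 * g - 2) - k / 2 ≤ e₁ ∧
      (e₁ : ℚ) ≤ (d : ℚ) * ((2 * g₁ - 2 + k : ℤ) : ℚ) / (2 * g - 2) + k / 2 := by
  unfold IsBalanced BasicIneq
  rw [mu2_eq g d g₁ g₂ k hg hsum]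
  constructor
  · rintro ⟨hd, ⟨h1, h2⟩, _⟩; exact ⟨hd, h1, h2⟩
  · rintro ⟨hd, h1, h2⟩
    have he2 : (e₂ : ℚ) = d - e₁ := by
      have : (e₁ : ℚ) + (e₂ : ℚ) = (d : ℚ) := by exact_mod_cast hd
      linarith
    exact ⟨hd, ⟨h1, h2⟩, by rw [he2]; constructor <;> linarith⟩

lemma stb_char (g d g₁ g₂ k e₁ e₂ : ℤ) (hg : 2 ≤ g) (hsum : g = g₁ + g₂ + k - 1) :
    IsStablyBalanced g d g₁ g₂ k e₁ e₂ ↔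
      e₁ + e₂ = d ∧
      (d : ℚ) * ((2 * g₁ - 2 + k : ℤ) : ℚ) / (2 * g - 2) - k / 2 < e₁ ∧
      (e₁ : ℚ) < (d : ℚ) * ((2 * g₁ - 2 + k : ℤ) : ℚ) / (2 * g - 2) + k / 2 := by
  unfold IsStablyBalanced BasicIneqStrict
  rw [mu2_eq g d g₁ g₂ k hg hsum]
  constructor
  · rintro ⟨hd, ⟨h1, h2⟩, _⟩; exact ⟨hd, h1, h2⟩
  · rintro ⟨hd, h1, h2⟩
    have he2 : (e₂ : ℚ) = d - e₁ := by
      have : (e₁ : ℚ) + (e₂ : ℚ) = (d : ℚ) := by exact_mod_cast hd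
      linarith
    exact ⟨hd, ⟨h1, h2⟩, by rw [he2]; constructor <;> linarith⟩

/-- Remark 1.2 (vine-curve form): there exist two distinct balanced multidegrees of total
degree `d` that are equivalent up to twisters (i.e. with `k ∣ e₁ - e₁'`) iff the curve is
`d`-special. -/
theorem stmt_12 (g d : ℤ) (hg : 2 ≤ g) (g₁ g₂ k : ℤ) (hvine : StableVine g g₁ g₂ k) :
    (∃ e₁ e₂ e₁' e₂' : ℤ, IsBalanced g d g₁ g₂ k e₁ e₂ ∧ IsBalanced g d g₁ g₂ k e₁' e₂' ∧
      ¬(e₁ = e₁' ∧ e₂ = e₂') ∧ k ∣ e₁ - e₁') ↔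
      DSpecial g d g₁ g₂ k := by
  obtain ⟨hg1, hg2, hk, hsum, -⟩ := hvine
  have hbal := fun a b => bal_char g d g₁ g₂ k a b hg hsum
  have hstb := fun a b => stb_char g d g₁ g₂ k a b hg hsum
  have hkq : (1:ℚ) ≤ (k:ℚ) := by exact_mod_cast hk
  constructor
  · rintro ⟨e₁, e₂, e₁', e₂', hb, hb', hne, hdvd⟩
    rw [hbal] at hb hb'
    obtain ⟨hd, h1, h2⟩ := hb
    obtain ⟨hd', h1', h2'⟩ := hb'
    have hne1 : e₁ ≠ e₁' := by rintro rfl; exact hne ⟨rfl, by omega⟩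
    have habs : k ≤ |e₁ - e₁'| :=
      Int.le_of_dvd (abs_pos.mpr (sub_ne_zero.mpr hne1)) ((dvd_abs _ _).mpr hdvd)
    have hle1 : (e₁:ℚ) - e₁' ≤ k := by linarith
    have hle2 : -(k:ℚ) ≤ (e₁:ℚ) - e₁' := by linarith
    have habs2 : |e₁ - e₁'| ≤ k := abs_le.mpr ⟨by exact_mod_cast hle2, by exact_mod_cast hle1⟩
    rcases lt_trichotomy e₁ e₁' with hlt | heq | hlt
    · have hek : e₁' - e₁ = k := by
        rw [abs_sub_comm, abs_of_pos (by omega)] at habs2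
        rw [abs_sub_comm, abs_of_pos (by omega)] at habs
        omega
      have hekq : (e₁':ℚ) = e₁ + k := by
        have : ((e₁' - e₁ : ℤ) : ℚ) = (k:ℚ) := by exact_mod_cast hek
        push_cast at this; linarith
      refine ⟨e₁, e₂, (hbal _ _).mpr ⟨hd, h1, h2⟩, ?_⟩
      rw [hstb]
      rintro ⟨-, hs1, -⟩
      linarith
    · exact absurd heq hne1
    · have hek : e₁ - e₁' = k := by
        rw [abs_of_pos (by omega)] at habs2
        rw [abs_of_pos (by omega)] at habs
        omega
      have hekq : (e₁:ℚ) = e₁' + k := by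
        have : ((e₁ - e₁' : ℤ) : ℚ) = (k:ℚ) := by exact_mod_cast hek
        push_cast at this; linarith
      refine ⟨e₁', e₂', (hbal _ _).mpr ⟨hd', h1', h2'⟩, ?_⟩
      rw [hstb]
      rintro ⟨-, hs1, -⟩
      linarith
  · rintro ⟨e₁, e₂, hb, hnsb⟩
    rw [hbal] at hb
    obtain ⟨hd, h1, h2⟩ := hb
    rw [hstb] at hnsb
    have hends : (e₁:ℚ) = (d : ℚ) * ((2 * g₁ - 2 + k : ℤ) : ℚ) / (2 * g - 2) - k / 2 ∨
        (e₁:ℚ) = (d : ℚ) * ((2 * g₁ - 2 + k : ℤ) : ℚ) / (2 * g - 2) + k / 2 := by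
      by_contra hcon
      push_neg at hcon
      exact hnsb ⟨hd, lt_of_le_of_ne h1 (Ne.symm hcon.1), lt_of_le_of_ne h2 hcon.2⟩
    rcases hends with he | he
    · refine ⟨e₁, e₂, e₁ + k, e₂ - k, (hbal _ _).mpr ⟨hd, h1, h2⟩,
        (hbal _ _).mpr ⟨by omega, ?_, ?_⟩, fun h => by omega, ⟨-1, by ring⟩⟩
      · push_cast [] at h1 h2 he ⊢; linarith
      · push_cast [] at h1 h2 he ⊢; linarith
    · refine ⟨e₁, e₂, e₁ - k, e₂ + k, (hbal _ _).mpr ⟨hd, h1, h2⟩,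
        (hbal _ _).mpr ⟨by omega, ?_, ?_⟩, fun h => by omega, ⟨1, by ring⟩⟩
      · push_cast [] at h1 h2 he ⊢; linarith
      · push_cast [] at h1 h2 he ⊢; linarith
end

section
/- Let g ≥ 2 and d be integers with (2g − 2) dividing (d − g + 1) (equivalently, d ≡ g − 1 (mod 2g − 2)). Then every stable vine curve of genus g is d-special. -/
/-- Remark 2.8 (vine-curve form): if `d ≡ g - 1 (mod 2g - 2)` then every stable vine curve
of genus `g` is `d`-special. -/
theorem stmt_14 (g d : ℤ) (hg : 2 ≤ g) (hd : 2 * g - 2 ∣ d - g + 1) :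
    ∀ g₁ g₂ k : ℤ, StableVine g g₁ g₂ k → DSpecial g d g₁ g₂ k := by
  rintro g₁ g₂ k ⟨hg₁, hg₂, hk, hsum, _⟩
  obtain ⟨m, hm⟩ := hd
  have hdQ : (d : ℚ) = (2 * g - 2) * m + g - 1 := by
    have : d = (2 * g - 2) * m + g - 1 := by linarith
    exact_mod_cast this
  have hne : (2 * (g : ℚ) - 2) ≠ 0 := by
    have h2 : (2 : ℚ) ≤ (g : ℚ) := by exact_mod_cast hg
    intro h; linarith
  have hkQ : (1 : ℚ) ≤ (k : ℚ) := by exact_mod_cast hk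
  have key1 : (d : ℚ) * (2 * (g₁ : ℚ) - 2 + k) / (2 * g - 2)
      = m * (2 * g₁ - 2 + k) + g₁ - 1 + k / 2 := by
    rw [hdQ, div_eq_iff hne]; ring
  have key2 : (d : ℚ) * (2 * (g₂ : ℚ) - 2 + k) / (2 * g - 2)
      = m * (2 * g₂ - 2 + k) + g₂ - 1 + k / 2 := by
    rw [hdQ, div_eq_iff hne]; ring
  refine ⟨m * (2 * g₁ - 2 + k) + g₁ - 1 + k, m * (2 * g₂ - 2 + k) + g₂ - 1, ?_, ?_⟩
  · refine ⟨by linear_combination (-(2 * m + 1)) * hsum - hm, ⟨?_, ?_⟩, ⟨?_, ?_⟩⟩ <;> push_cast <;>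
      [rw [key1]; rw [key1]; rw [key2]; rw [key2]] <;> linarith
  · rintro ⟨-, ⟨-, h⟩, -⟩
    push_cast at h
    rw [key1] at h
    linarith
end

section
/- Let g ≥ 3 be an odd integer. Then gcd(2 − g, 2g − 2) = 1, and no stable vine curve of genus g is 1-special (i.e., no stable vine curve of genus g admits a balanced multidegree of total degree 1 which is not stably balanced). -/
lemma key_aux (g k w e : ℤ) (hg : 3 ≤ g) (hw1 : 1 ≤ w) (hw2 : w ≤ 2 * g - 3)
    (hb : BasicIneq g 1 k w e) (hns : ¬ BasicIneqStrict g 1 k w e) :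
    w = g - 1 ∧ k % 2 = 1 := by
  obtain ⟨h1, h2⟩ := hb
  rw [BasicIneqStrict, not_and_or, not_lt, not_lt] at hns
  have hD : (2 * (g:ℚ) - 2) ≠ 0 := by
    have : (3:ℚ) ≤ g := by exact_mod_cast hg
    linarith
  have hcase : (g - 1) * (2 * e + k) = w ∨ (g - 1) * (2 * e - k) = w := by
    rcases hns with h | h
    · left
      have heq : (e:ℚ) = (1:ℚ) * w / (2 * g - 2) - k / 2 := le_antisymm h h1
      have hq : ((g:ℚ) - 1) * (2 * e + k) = w := by
        have hg1 : (g:ℚ) - 1 ≠ 0 := by intro h0; apply hD; linarith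
        field_simp at heq
        linarith
      exact_mod_cast hq
    · right
      have heq : (e:ℚ) = (1:ℚ) * w / (2 * g - 2) + k / 2 := le_antisymm h2 h
      have hq : ((g:ℚ) - 1) * (2 * e - k) = w := by
        have hg1 : (g:ℚ) - 1 ≠ 0 := by intro h0; apply hD; linarith
        field_simp at heq
        linarith
      exact_mod_cast hq
  have hg2 : 2 ≤ g - 1 := by omega
  rcases hcase with h | h
  · have ht : 2 * e + k = 1 := by nlinarith
    exact ⟨by nlinarith, by omega⟩
  · have ht : 2 * e - k = 1 := by nlinarith
    exact ⟨by nlinarith, by omega⟩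

/-- Example 2.4 (vine-curve form), odd genus: `gcd(2 - g, 2g - 2) = 1` and no stable vine
curve of genus `g` is `1`-special. -/
theorem stmt_15 (g : ℤ) (hg : 3 ≤ g) (hodd : Odd g) :
    Int.gcd (2 - g) (2 * g - 2) = 1 ∧
      ∀ g₁ g₂ k : ℤ, StableVine g g₁ g₂ k → ¬ DSpecial g 1 g₁ g₂ k := by
  obtain ⟨m, hm⟩ := hodd
  constructor
  · rw [← Int.isCoprime_iff_gcd_eq_one]
    exact ⟨2 - g, 1 - m, by subst hm; ring⟩
  · rintro g₁ g₂ k ⟨hg₁, hg₂, hk, hgen, hst⟩ ⟨e₁, e₂, ⟨hsum, hb1, hb2⟩, hns⟩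
    have hw1a : 1 ≤ 2 * g₁ - 2 + k := by
      rcases eq_or_lt_of_le hg₁ with h | h
      · have := hst (Or.inl h.symm); omega
      · omega
    have hw2a : 1 ≤ 2 * g₂ - 2 + k := by
      rcases eq_or_lt_of_le hg₂ with h | h
      · have := hst (Or.inr h.symm); omega
      · omega
    have hor : ¬ BasicIneqStrict g 1 k (2 * g₁ - 2 + k) e₁ ∨
        ¬ BasicIneqStrict g 1 k (2 * g₂ - 2 + k) e₂ := by
      by_contra h
      push_neg at h
      exact hns ⟨hsum, h.1, h.2⟩
    rcases hor with h | h
    · obtain ⟨hw, hkodd⟩ := key_aux g k (2 * g₁ - 2 + k) e₁ hg hw1a (by omega) hb1 h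
      omega
    · obtain ⟨hw, hkodd⟩ := key_aux g k (2 * g₂ - 2 + k) e₂ hg hw2a (by omega) hb2 h
      omega
end

section
/- Let g ≥ 2 be an even integer. Then a stable vine curve (g₁, g₂, k) of genus g is 1-special if and only if g₁ = g₂; moreover, in that case k is odd. -/
lemma extractA (q w c e : ℚ) (hq : q ≠ 0) (h : w / q - c / 2 = e) :
    2 * w = (c + 2 * e) * q := by
  have h' : w / q = e + c / 2 := by linarith
  rw [div_eq_iff hq] at h'
  linear_combination 2 * h'

lemma extractB (q w c e : ℚ) (hq : q ≠ 0) (h : e = w / q + c / 2) :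
    2 * w = (c + 2 * (e - c)) * q := by
  have h' : w / q = e - c / 2 := by linarith
  rw [div_eq_iff hq] at h'
  linear_combination 2 * h'

lemma auxZ (g k w m : ℤ) (hg : 2 ≤ g) (hw1 : 1 ≤ w) (hw2 : w ≤ 2 * g - 3)
    (h : 2 * w = (k + 2 * m) * (2 * g - 2)) : w = g - 1 ∧ k = 1 - 2 * m := by
  have hq : (0 : ℤ) < 2 * g - 2 := by omega
  have hc1 : 0 < k + 2 * m := by nlinarith
  have hc2 : k + 2 * m < 2 := by nlinarith
  have hco : k + 2 * m = 1 := by omega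
  rw [hco] at h
  constructor <;> omega

lemma forward_dir (g : ℤ) (hg : 2 ≤ g) (g₁ g₂ k : ℤ)
    (hvine : StableVine g g₁ g₂ k) (hds : DSpecial g 1 g₁ g₂ k) :
    g₁ = g₂ ∧ Odd k := by
  obtain ⟨hg1, hg2, hk, hsum, hst⟩ := hvine
  have hw1 : 1 ≤ 2 * g₁ - 2 + k := by
    by_cases h0 : g₁ = 0
    · have := hst (Or.inl h0); omega
    · omega
  have hw2 : 1 ≤ 2 * g₂ - 2 + k := by
    by_cases h0 : g₂ = 0
    · have := hst (Or.inr h0); omega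
    · omega
  have hw1' : 2 * g₁ - 2 + k ≤ 2 * g - 3 := by omega
  have hw2' : 2 * g₂ - 2 + k ≤ 2 * g - 3 := by omega
  have hqne : (2 * (g : ℚ) - 2) ≠ 0 := by
    have : (2 : ℚ) ≤ (g : ℚ) := by exact_mod_cast hg
    intro h; linarith
  obtain ⟨e₁, e₂, hbal, hns⟩ := hds
  obtain ⟨hsumE, ⟨h1l, h1u⟩, ⟨h2l, h2u⟩⟩ := hbal
  push_cast [one_mul] at h1l h1u h2l h2u
  have hns' : ¬ (BasicIneqStrict g 1 k (2 * g₁ - 2 + k) e₁ ∧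
      BasicIneqStrict g 1 k (2 * g₂ - 2 + k) e₂) := fun h => hns ⟨hsumE, h.1, h.2⟩
  have hkey : ∃ m : ℤ, (2 * g₁ - 2 + k = g - 1 ∧ k = 1 - 2 * m) ∨
      (2 * g₂ - 2 + k = g - 1 ∧ k = 1 - 2 * m) := by
    rcases not_and_or.mp hns' with h | h
    · rcases not_and_or.mp (h : ¬(_ ∧ _)) with h' | h'
      · push_cast [one_mul] at h'
        have heq := le_antisymm h1l (not_lt.mp h')
        have hQ := extractA _ _ _ _ hqne heq
        have hZ : 2 * (2 * g₁ - 2 + k) = (k + 2 * e₁) * (2 * g - 2) := by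
          have h2 : ((2 * (2 * g₁ - 2 + k) : ℤ) : ℚ) = (((k + 2 * e₁) * (2 * g - 2) : ℤ) : ℚ) := by
            push_cast at hQ ⊢; linear_combination hQ
          exact Int.cast_inj.mp h2
        obtain ⟨ha, hb⟩ := auxZ g k _ e₁ hg hw1 hw1' hZ
        exact ⟨e₁, Or.inl ⟨ha, hb⟩⟩
      · push_cast [one_mul] at h'
        have heq := le_antisymm h1u (not_lt.mp h')
        have hQ := extractB _ _ _ _ hqne heq
        have hZ : 2 * (2 * g₁ - 2 + k) = (k + 2 * (e₁ - k)) * (2 * g - 2) := by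
          have h2 : ((2 * (2 * g₁ - 2 + k) : ℤ) : ℚ) = (((k + 2 * (e₁ - k)) * (2 * g - 2) : ℤ) : ℚ) := by
            push_cast at hQ ⊢; linear_combination hQ
          exact Int.cast_inj.mp h2
        obtain ⟨ha, hb⟩ := auxZ g k _ (e₁ - k) hg hw1 hw1' hZ
        exact ⟨e₁ - k, Or.inl ⟨ha, hb⟩⟩
    · rcases not_and_or.mp (h : ¬(_ ∧ _)) with h' | h'
      · push_cast [one_mul] at h'
        have heq := le_antisymm h2l (not_lt.mp h')
        have hQ := extractA _ _ _ _ hqne heq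
        have hZ : 2 * (2 * g₂ - 2 + k) = (k + 2 * e₂) * (2 * g - 2) := by
          have h2 : ((2 * (2 * g₂ - 2 + k) : ℤ) : ℚ) = (((k + 2 * e₂) * (2 * g - 2) : ℤ) : ℚ) := by
            push_cast at hQ ⊢; linear_combination hQ
          exact Int.cast_inj.mp h2
        obtain ⟨ha, hb⟩ := auxZ g k _ e₂ hg hw2 hw2' hZ
        exact ⟨e₂, Or.inr ⟨ha, hb⟩⟩
      · push_cast [one_mul] at h'
        have heq := le_antisymm h2u (not_lt.mp h')
        have hQ := extractB _ _ _ _ hqne heq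
        have hZ : 2 * (2 * g₂ - 2 + k) = (k + 2 * (e₂ - k)) * (2 * g - 2) := by
          have h2 : ((2 * (2 * g₂ - 2 + k) : ℤ) : ℚ) = (((k + 2 * (e₂ - k)) * (2 * g - 2) : ℤ) : ℚ) := by
            push_cast at hQ ⊢; linear_combination hQ
          exact Int.cast_inj.mp h2
        obtain ⟨ha, hb⟩ := auxZ g k _ (e₂ - k) hg hw2 hw2' hZ
        exact ⟨e₂ - k, Or.inr ⟨ha, hb⟩⟩
  obtain ⟨m, hm⟩ := hkey
  constructor
  · rcases hm with ⟨h, _⟩ | ⟨h, _⟩ <;> omega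
  · rcases hm with ⟨_, h⟩ | ⟨_, h⟩ <;> exact ⟨-m, by omega⟩

lemma backward_dir (g : ℤ) (hg : 2 ≤ g) (heven : Even g) (g₁ g₂ k : ℤ)
    (hvine : StableVine g g₁ g₂ k) (h12 : g₁ = g₂) : DSpecial g 1 g₁ g₂ k := by
  obtain ⟨hg1, hg2, hk, hsum, hst⟩ := hvine
  subst h12
  obtain ⟨c, hc⟩ := heven
  have ht : k = 2 * (c - g₁) + 1 := by omega
  set t : ℤ := c - g₁ with htdef
  have ht0 : 0 ≤ t := by omega
  have hqne : (2 * (g : ℚ) - 2) ≠ 0 := by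
    have : (2 : ℚ) ≤ (g : ℚ) := by exact_mod_cast hg
    intro h; linarith
  have hnum : 2 * (g₁ : ℚ) - 2 + (k : ℚ) = (g : ℚ) - 1 := by
    have : 2 * g₁ - 2 + k = g - 1 := by omega
    exact_mod_cast this
  have hE : (2 * (g₁ : ℚ) - 2 + (k : ℚ)) / (2 * (g : ℚ) - 2) = 1 / 2 := by
    rw [hnum, div_eq_iff hqne]; ring
  have hk' : (k : ℚ) = 2 * (t : ℚ) + 1 := by exact_mod_cast ht
  have ht0' : (0 : ℚ) ≤ (t : ℚ) := by exact_mod_cast ht0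
  refine ⟨-t, t + 1, ⟨by omega, ⟨?_, ?_⟩, ⟨?_, ?_⟩⟩, ?_⟩
  · push_cast [one_mul]; linarith [hE]
  · push_cast [one_mul]; linarith [hE]
  · push_cast [one_mul]; linarith [hE]
  · push_cast [one_mul]; linarith [hE]
  · rintro ⟨-, ⟨hlt, -⟩, -⟩
    push_cast [one_mul] at hlt
    linarith [hE]

/-- Example 2.4 (vine-curve form), even genus: a stable vine curve of genus `g` is
`1`-special iff its two components have the same genus, in which case `k` is odd. -/
theorem stmt_16 (g : ℤ) (hg : 2 ≤ g) (heven : Even g) (g₁ g₂ k : ℤ)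
    (hvine : StableVine g g₁ g₂ k) :
    (DSpecial g 1 g₁ g₂ k ↔ g₁ = g₂) ∧ (DSpecial g 1 g₁ g₂ k → Odd k) := by
  refine ⟨⟨fun h => (forward_dir g hg g₁ g₂ k hvine h).1,
    fun h => backward_dir g hg heven g₁ g₂ k hvine h⟩,
    fun h => (forward_dir g hg g₁ g₂ k hvine h).2⟩
end
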